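/- There exists M₀ such that for all m ≥ M₀, the equation f(x)^m + g(x)^m + h(x)^m = 0 has no solution in nonzero polynomials f, g, h ∈ ℂ[x] where no one of f, g, h is a scalar multiple of another. -/

import Mathlib

open Polynomial

/-- There exists `M₀` such that for all `m ≥ M₀`, the equation
`f^m + g^m + h^m = 0` has no solution in nonzero polynomials over ℂ where no
one of `f, g, h` is a scalar multiple of another. -/
theorem no_nontrivial_power_sums_three :
    ∃ M₀ : ℕ, ∀ m : ℕ, M₀ ≤ m →
      ¬ ∃ f g h : ℂ[X], f ≠ 0 ∧ g ≠ 0 ∧ h ≠ 0 ∧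
        (∀ c : ℂ, f ≠ c • g) ∧ (∀ c : ℂ, f ≠ c • h) ∧ (∀ c : ℂ, g ≠ c • h) ∧
        (∀ c : ℂ, g ≠ c • f) ∧ (∀ c : ℂ, h ≠ c • f) ∧ (∀ c : ℂ, h ≠ c • g) ∧
        f ^ m + g ^ m + h ^ m = 0 := by
  classical
  refine ⟨3, fun m hm => ?_⟩
  rintro ⟨f, g, h, hf, hg, hh, hfg, hfh, hgh, hgf, hhf, hhg, heq⟩
  have hm1 : m ≠ 0 := by omega
  -- divide out by the gcd
  set d : ℂ[X] := EuclideanDomain.gcd f (EuclideanDomain.gcd g h) with hd_def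
  obtain ⟨f', hf'⟩ : d ∣ f := EuclideanDomain.gcd_dvd_left _ _
  obtain ⟨g', hg'⟩ : d ∣ g :=
    dvd_trans (EuclideanDomain.gcd_dvd_right f _) (EuclideanDomain.gcd_dvd_left g h)
  obtain ⟨h', hh'⟩ : d ∣ h :=
    dvd_trans (EuclideanDomain.gcd_dvd_right f _) (EuclideanDomain.gcd_dvd_right g h)
  have hd : d ≠ 0 := by
    intro h0
    rw [h0, zero_mul] at hf'
    exact hf hf'
  have hd_max : ∀ e : ℂ[X], e ∣ f → e ∣ g → e ∣ h → e ∣ d := fun e h1 h2 h3 =>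
    EuclideanDomain.dvd_gcd h1 (EuclideanDomain.dvd_gcd h2 h3)
  have hf0 : f' ≠ 0 := by rintro rfl; rw [mul_zero] at hf'; exact hf hf'
  have hg0 : g' ≠ 0 := by rintro rfl; rw [mul_zero] at hg'; exact hg hg'
  have hh0 : h' ≠ 0 := by rintro rfl; rw [mul_zero] at hh'; exact hh hh'
  -- the reduced equation
  have hsum : f' ^ m + g' ^ m + h' ^ m = 0 := by
    have : d ^ m * (f' ^ m + g' ^ m + h' ^ m) = 0 := by
      rw [← heq, hf', hg', hh']; ring
    exact (mul_eq_zero.mp this).resolve_left (pow_ne_zero _ hd)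
  -- pairwise coprimality
  have cop : ∀ a b c : ℂ[X], a ≠ 0 → a ^ m + b ^ m + c ^ m = 0 →
      (∀ e : ℂ[X], e ∣ d * a → e ∣ d * b → e ∣ d * c → e ∣ d) → IsCoprime a b := by
    intro a b c ha0 hsum' hmax
    by_contra hnc
    have hgcd0 : EuclideanDomain.gcd a b ≠ 0 := fun h0 =>
      ha0 (EuclideanDomain.gcd_eq_zero_iff.mp h0).1
    have hgcdnu : ¬ IsUnit (EuclideanDomain.gcd a b) := fun hu =>
      hnc (EuclideanDomain.gcd_isUnit_iff.mp hu)
    obtain ⟨p, hp, hpd⟩ := WfDvdMonoid.exists_irreducible_factor hgcdnu hgcd0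
    have hpa : p ∣ a := hpd.trans (EuclideanDomain.gcd_dvd_left _ _)
    have hpb : p ∣ b := hpd.trans (EuclideanDomain.gcd_dvd_right _ _)
    have hpc : p ∣ c := by
      have hprime : Prime p := hp.prime
      refine hprime.dvd_of_dvd_pow (n := m) ?_
      have : c ^ m = -(a ^ m) + -(b ^ m) := by linear_combination hsum'
      rw [this]
      exact dvd_add ((dvd_pow hpa hm1).neg_right) ((dvd_pow hpb hm1).neg_right)
    have : d * p ∣ d := hmax (d * p) (mul_dvd_mul_left d hpa) (mul_dvd_mul_left d hpb)
      (mul_dvd_mul_left d hpc)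
    have hp1 : p ∣ 1 := (mul_dvd_mul_iff_left hd).mp (by simpa using this)
    exact hp.not_isUnit (isUnit_of_dvd_one hp1)
  have cab : IsCoprime f' g' := by
    refine cop f' g' h' hf0 hsum fun e h1 h2 h3 => hd_max e ?_ ?_ ?_ <;>
      [rw [hf']; rw [hg']; rw [hh']] <;> assumption
  have cbc : IsCoprime g' h' := by
    refine cop g' h' f' hg0 (by linear_combination hsum) fun e h1 h2 h3 =>
      hd_max e ?_ ?_ ?_ <;> [rw [hf']; rw [hg']; rw [hh']] <;> assumption
  have cca : IsCoprime h' f' := by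
    refine cop h' f' g' hh0 (by linear_combination hsum) fun e h1 h2 h3 =>
      hd_max e ?_ ?_ ?_ <;> [rw [hf']; rw [hg']; rw [hh']] <;> assumption
  -- apply Mason–Stothers / polynomial abc
  rcases Polynomial.abc (pow_ne_zero m hf0) (pow_ne_zero m hg0) (pow_ne_zero m hh0)
      (cab.pow) hsum with hdeg | hder
  · -- degree contradiction
    obtain ⟨h1, h2, h3⟩ := hdeg
    have hrad : (UniqueFactorizationMonoid.radical (f' ^ m * g' ^ m * h' ^ m)).natDegree ≤
        f'.natDegree + g'.natDegree + h'.natDegree := by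
      have e1 : f' ^ m * g' ^ m * h' ^ m = (f' * g' * h') ^ m := by ring
      rw [e1, UniqueFactorizationMonoid.radical_pow _ (by omega)]
      calc (UniqueFactorizationMonoid.radical (f' * g' * h')).natDegree
          ≤ (f' * g' * h').natDegree :=
            Polynomial.natDegree_le_of_dvd UniqueFactorizationMonoid.radical_dvd_self
              (by simp [hf0, hg0, hh0])
        _ = f'.natDegree + g'.natDegree + h'.natDegree := by
            rw [Polynomial.natDegree_mul (mul_ne_zero hf0 hg0) hh0,
              Polynomial.natDegree_mul hf0 hg0]
    rw [Polynomial.natDegree_pow] at h1 h2 h3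
    have l1 : 3 * f'.natDegree ≤ m * f'.natDegree := Nat.mul_le_mul_right _ hm
    have l2 : 3 * g'.natDegree ≤ m * g'.natDegree := Nat.mul_le_mul_right _ hm
    have l3 : 3 * h'.natDegree ≤ m * h'.natDegree := Nat.mul_le_mul_right _ hm
    omega
  · -- constant case: f' and g' are constants, so f is a scalar multiple of g
    obtain ⟨d1, d2, _⟩ := hder
    have hnf : f'.natDegree = 0 := by
      have := Polynomial.natDegree_eq_zero_of_derivative_eq_zero d1
      rw [Polynomial.natDegree_pow] at this
      exact (Nat.mul_eq_zero.mp this).resolve_left hm1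
    have hng : g'.natDegree = 0 := by
      have := Polynomial.natDegree_eq_zero_of_derivative_eq_zero d2
      rw [Polynomial.natDegree_pow] at this
      exact (Nat.mul_eq_zero.mp this).resolve_left hm1
    obtain ⟨a, rfl⟩ : ∃ a : ℂ, f' = C a := ⟨f'.coeff 0, Polynomial.eq_C_of_natDegree_eq_zero hnf⟩
    obtain ⟨b, rfl⟩ : ∃ b : ℂ, g' = C b := ⟨g'.coeff 0, Polynomial.eq_C_of_natDegree_eq_zero hng⟩
    have hb : b ≠ 0 := fun h0 => hg0 (by simp [h0])
    refine hfg (a / b) ?_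
    rw [hf', hg', Polynomial.smul_eq_C_mul]
    rw [show C (a / b) * (d * C b) = d * (C (a / b) * C b) by ring, ← Polynomial.C_mul,
      div_mul_cancel₀ a hb]
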